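/- (Proposition 5.) Under the stated primal feasibility, dual feasibility, complementary slackness conditions, z₁ = tr(R̂ W) > 0, and the equality x λ_{N−1}(C̄) + y₁ + y₂ = 0, the following hold: (1) x < 0 and tr(C̄ Z) < λ_{N−1}(C̄) tr Z; (2) z₁ = (tr(C̄ Z) + z₂ λ_{N−1}(C̄))/Δ₀; (3) y₁ + y₂ > 0; (4) λ₁(W) ≥ −x(λ_{N−1}(C̄) − λ_N(C̄)); (5) if moreover W = w w^H for some w ∈ ℂ^N and λ_{N−1}(C̄) > λ_N(C̄), then w^H R̂ w ≥ −x(λ_{N−1}(C̄) − λ_N(C̄)) λ_N(R̂). -/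

import Mathlib

open Matrix
open scoped ComplexOrder

/-- The eigenvalues of a Hermitian matrix listed in decreasing order:
`eigDesc hA 0 ≥ eigDesc hA 1 ≥ … ≥ eigDesc hA (N-1)`. -/
noncomputable def eigDesc {N : ℕ} {A : Matrix (Fin N) (Fin N) ℂ} (hA : A.IsHermitian)
    (i : Fin N) : ℝ :=
  hA.eigenvalues (Tuple.sort hA.eigenvalues i.rev)

lemma conj_diag_psd {N : ℕ} {A : Matrix (Fin N) (Fin N) ℂ} (hA : A.IsHermitian)
    (f : Fin N → ℝ) (hf : ∀ i, 0 ≤ f i) :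
    ((hA.eigenvectorUnitary : Matrix (Fin N) (Fin N) ℂ) *
      Matrix.diagonal (fun i => (f i : ℂ)) *
      star (hA.eigenvectorUnitary : Matrix (Fin N) (Fin N) ℂ)).PosSemidef := by
  rw [Matrix.star_eq_conjTranspose]
  refine Matrix.PosSemidef.mul_mul_conjTranspose_same ?_ _
  exact Matrix.posSemidef_diagonal_iff.mpr fun i =>
    (Complex.zero_le_real).mpr (hf i)

lemma diag_eq_sub {N : ℕ} (e : Fin N → ℝ) (c : ℝ) :
    Matrix.diagonal (fun i => ((e i - c : ℝ) : ℂ)) =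
      Matrix.diagonal (RCLike.ofReal ∘ e) - (c : ℂ) • (1 : Matrix (Fin N) (Fin N) ℂ) := by
  ext i j
  rcases eq_or_ne i j with rfl | hij
  · simp
  · simp [Matrix.diagonal_apply_ne _ hij, Matrix.one_apply_ne hij, hij]

/-- If all eigenvalues are ≥ c then A - c•1 is PSD. -/
lemma sub_smul_one_posSemidef {N : ℕ} {A : Matrix (Fin N) (Fin N) ℂ} (hA : A.IsHermitian)
    {c : ℝ} (h : ∀ i, c ≤ hA.eigenvalues i) : (A - (c:ℂ) • 1).PosSemidef := by
  have hU : (hA.eigenvectorUnitary : Matrix (Fin N) (Fin N) ℂ) *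
      star (hA.eigenvectorUnitary : Matrix (Fin N) (Fin N) ℂ) = 1 :=
    Matrix.mem_unitaryGroup_iff.mp hA.eigenvectorUnitary.2
  have key : A - (c:ℂ) • 1 =
      (hA.eigenvectorUnitary : Matrix (Fin N) (Fin N) ℂ) *
        Matrix.diagonal (fun i => ((hA.eigenvalues i - c : ℝ) : ℂ)) *
        star (hA.eigenvectorUnitary : Matrix (Fin N) (Fin N) ℂ) := by
    conv_lhs => rw [hA.spectral_theorem, Unitary.conjStarAlgAut_apply]
    rw [diag_eq_sub, Matrix.mul_sub, Matrix.sub_mul]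
    congr 1
    rw [Matrix.mul_smul, Matrix.smul_mul, Matrix.mul_one, hU]
  rw [key]
  exact conj_diag_psd hA _ fun i => by linarith [h i]

/-- If all eigenvalues are ≤ c then c•1 - A is PSD. -/
lemma smul_one_sub_posSemidef {N : ℕ} {A : Matrix (Fin N) (Fin N) ℂ} (hA : A.IsHermitian)
    {c : ℝ} (h : ∀ i, hA.eigenvalues i ≤ c) : ((c:ℂ) • 1 - A).PosSemidef := by
  have hU : (hA.eigenvectorUnitary : Matrix (Fin N) (Fin N) ℂ) *
      star (hA.eigenvectorUnitary : Matrix (Fin N) (Fin N) ℂ) = 1 :=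
    Matrix.mem_unitaryGroup_iff.mp hA.eigenvectorUnitary.2
  have key : (c:ℂ) • 1 - A =
      (hA.eigenvectorUnitary : Matrix (Fin N) (Fin N) ℂ) *
        Matrix.diagonal (fun i => ((c - hA.eigenvalues i : ℝ) : ℂ)) *
        star (hA.eigenvectorUnitary : Matrix (Fin N) (Fin N) ℂ) := by
    have : Matrix.diagonal (fun i => ((c - hA.eigenvalues i : ℝ) : ℂ)) =
        (c : ℂ) • (1 : Matrix (Fin N) (Fin N) ℂ) - Matrix.diagonal (RCLike.ofReal ∘ hA.eigenvalues) := by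
      ext i j
      rcases eq_or_ne i j with rfl | hij
      · simp
      · simp [Matrix.diagonal_apply_ne _ hij, Matrix.one_apply_ne hij, hij]
    conv_lhs => rw [hA.spectral_theorem, Unitary.conjStarAlgAut_apply]
    rw [this, Matrix.mul_sub, Matrix.sub_mul]
    congr 1
    rw [Matrix.mul_smul, Matrix.smul_mul, Matrix.mul_one, hU]
  rw [key]
  exact conj_diag_psd hA _ fun i => by linarith [h i]

/-- eigDesc at last index is the minimum eigenvalue. -/
lemma eigDesc_last_le {N : ℕ} (hN : 0 < N) {A : Matrix (Fin N) (Fin N) ℂ}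
    (hA : A.IsHermitian) (j : Fin N) :
    eigDesc hA ⟨N - 1, by omega⟩ ≤ hA.eigenvalues j := by
  have hrev : (⟨N - 1, by omega⟩ : Fin N).rev = ⟨0, hN⟩ := by
    ext; simp [Fin.rev]; omega
  rw [eigDesc, hrev]
  have hmono := Tuple.monotone_sort hA.eigenvalues
  have : hA.eigenvalues j =
      (hA.eigenvalues ∘ Tuple.sort hA.eigenvalues) ((Tuple.sort hA.eigenvalues).symm j) := by
    simp
  rw [this]
  exact hmono (Fin.le_def.mpr (Nat.zero_le _))

lemma le_eigDesc_zero {N : ℕ} (hN : 0 < N) {A : Matrix (Fin N) (Fin N) ℂ}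
    (hA : A.IsHermitian) (j : Fin N) :
    hA.eigenvalues j ≤ eigDesc hA ⟨0, hN⟩ := by
  have hrev : (⟨0, hN⟩ : Fin N).rev = ⟨N - 1, by omega⟩ := by
    ext; simp [Fin.rev]
  rw [eigDesc, hrev]
  have hmono := Tuple.monotone_sort hA.eigenvalues
  have : hA.eigenvalues j =
      (hA.eigenvalues ∘ Tuple.sort hA.eigenvalues) ((Tuple.sort hA.eigenvalues).symm j) := by
    simp
  rw [this]
  refine hmono (Fin.le_def.mpr ?_)
  have h2 := ((Tuple.sort hA.eigenvalues).symm j).isLt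
  show ((Tuple.sort hA.eigenvalues).symm j : ℕ) ≤ N - 1
  omega

lemma trace_eq_sum_eig {N : ℕ} {A : Matrix (Fin N) (Fin N) ℂ} (hA : A.IsHermitian) :
    Matrix.trace A = ∑ i, (hA.eigenvalues i : ℂ) := by
  have hU : star (hA.eigenvectorUnitary : Matrix (Fin N) (Fin N) ℂ) *
      (hA.eigenvectorUnitary : Matrix (Fin N) (Fin N) ℂ) = 1 :=
    Matrix.mem_unitaryGroup_iff'.mp hA.eigenvectorUnitary.2
  conv_lhs => rw [hA.spectral_theorem, Unitary.conjStarAlgAut_apply]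
  rw [Matrix.trace_mul_cycle, hU, Matrix.one_mul, Matrix.trace_diagonal]
  rfl
/-- Proposition 5: under primal feasibility, dual feasibility, complementary slackness,
`z₁ = tr(R̂W) > 0`, and `xλ_{N−1}(C̄) + y₁ + y₂ = 0`, one has (1) `x < 0` and
`tr(C̄Z) < λ_{N−1}(C̄) tr Z`; (2) `z₁ = (tr(C̄Z) + z₂λ_{N−1}(C̄))/Δ₀`; (3) `y₁ + y₂ > 0`;
(4) `λ₁(W) ≥ −x(λ_{N−1}(C̄) − λ_N(C̄))`; (5) if `W = wwᴴ` and `λ_{N−1}(C̄) > λ_N(C̄)`,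
then `wᴴR̂w ≥ −x(λ_{N−1}(C̄) − λ_N(C̄))λ_N(R̂)`. -/
theorem stmt_16 {N : ℕ} (hN : 2 ≤ N) (η₁ η₂ : ℝ) (hη₁0 : 0 ≤ η₁) (hη₁N : η₁ < N)
    (hη₂ : 0 ≤ η₂) (Δ₀ : ℝ) (hΔ₀ : 0 < Δ₀)
    (Cbar : Matrix (Fin N) (Fin N) ℂ) (hC : Cbar.PosSemidef)
    (Rhat : Matrix (Fin N) (Fin N) ℂ) (hR : Rhat.IsHermitian)
    (W Z : Matrix (Fin N) (Fin N) ℂ) (x y₁ y₂ z₁ z₂ : ℝ)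
    -- primal feasibility
    (hW : W.PosSemidef) (hx : x ≤ 0) (hy₁ : 0 ≤ y₁) (hy₂ : y₂ ≤ 0)
    (hlin : Δ₀ * x + ((N : ℝ) - η₁) * y₁ + ((N : ℝ) + η₂) * y₂ = 1)
    (hLMI : (W - (x : ℂ) • Cbar - ((y₁ + y₂ : ℝ) : ℂ) • 1).PosSemidef)
    (hvalid : x * eigDesc hC.isHermitian ⟨N - 2, by omega⟩ + y₁ + y₂ ≤ 0)
    -- dual feasibility
    (hZ : Z.PosSemidef) (hz₂ : 0 ≤ z₂) (hRZ : (Rhat - Z).PosSemidef)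
    (hd1 : (Matrix.trace (Cbar * Z)).re - Δ₀ * z₁ +
        eigDesc hC.isHermitian ⟨N - 2, by omega⟩ * z₂ ≤ 0)
    (hd2 : z₁ * ((N : ℝ) - η₁) ≤ (Matrix.trace Z).re + z₂)
    (hd3 : (Matrix.trace Z).re + z₂ ≤ z₁ * ((N : ℝ) + η₂))
    -- complementary slackness
    (hc1 : Matrix.trace ((Rhat - Z) * W) = 0)
    (hc2 : x * ((Matrix.trace (Cbar * Z)).re - Δ₀ * z₁ +
        eigDesc hC.isHermitian ⟨N - 2, by omega⟩ * z₂) = 0)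
    (hc3 : y₁ * ((Matrix.trace Z).re + z₂ - ((N : ℝ) - η₁) * z₁) = 0)
    (hc4 : y₂ * ((Matrix.trace Z).re + z₂ - ((N : ℝ) + η₂) * z₁) = 0)
    (hc5 : z₂ * (x * eigDesc hC.isHermitian ⟨N - 2, by omega⟩ + y₁ + y₂) = 0)
    (hc6 : Matrix.trace (Z * (W - (x : ℂ) • Cbar - ((y₁ + y₂ : ℝ) : ℂ) • 1)) = 0)
    -- zero duality gap and positive optimal value
    (hz₁ : z₁ = (Matrix.trace (Rhat * W)).re) (hz₁pos : 0 < z₁)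
    -- equality
    (heq : x * eigDesc hC.isHermitian ⟨N - 2, by omega⟩ + y₁ + y₂ = 0) :
    (x < 0 ∧ (Matrix.trace (Cbar * Z)).re <
        eigDesc hC.isHermitian ⟨N - 2, by omega⟩ * (Matrix.trace Z).re) ∧
    z₁ = ((Matrix.trace (Cbar * Z)).re + z₂ * eigDesc hC.isHermitian ⟨N - 2, by omega⟩) / Δ₀ ∧
    0 < y₁ + y₂ ∧
    eigDesc hW.isHermitian ⟨0, by omega⟩ ≥
      -x * (eigDesc hC.isHermitian ⟨N - 2, by omega⟩ -
        eigDesc hC.isHermitian ⟨N - 1, by omega⟩) ∧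
    (∀ w : Fin N → ℂ, W = Matrix.vecMulVec w (star w) →
      eigDesc hC.isHermitian ⟨N - 1, by omega⟩ < eigDesc hC.isHermitian ⟨N - 2, by omega⟩ →
      (star w ⬝ᵥ Rhat.mulVec w).re ≥
        -x * (eigDesc hC.isHermitian ⟨N - 2, by omega⟩ -
          eigDesc hC.isHermitian ⟨N - 1, by omega⟩) * eigDesc hR ⟨N - 1, by omega⟩) := by
  have n2lt : N - 2 < N := by omega
  have n1lt : N - 1 < N := by omega
  have n0lt : 0 < N := by omega
  set lam : ℝ := eigDesc hC.isHermitian ⟨N - 2, n2lt⟩ with hlam_def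
  set mu : ℝ := eigDesc hC.isHermitian ⟨N - 1, n1lt⟩ with hmu_def
  set lamW : ℝ := eigDesc hW.isHermitian ⟨0, n0lt⟩ with hlamW_def
  set rho : ℝ := eigDesc hR ⟨N - 1, n1lt⟩ with hrho_def
  have hlam_eig : lam = hC.isHermitian.eigenvalues
      (Tuple.sort hC.isHermitian.eigenvalues (Fin.rev ⟨N - 2, n2lt⟩)) := rfl
  have hmu_eig : mu = hC.isHermitian.eigenvalues
      (Tuple.sort hC.isHermitian.eigenvalues (Fin.rev ⟨N - 1, n1lt⟩)) := rfl
  have hlamW_eig : lamW = hW.isHermitian.eigenvalues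
      (Tuple.sort hW.isHermitian.eigenvalues (Fin.rev ⟨0, n0lt⟩)) := rfl
  have hmu_desc : mu = eigDesc hC.isHermitian ⟨N - 1, n1lt⟩ := rfl
  have hlamW_desc : lamW = eigDesc hW.isHermitian ⟨0, n0lt⟩ := rfl
  have hrho_desc : rho = eigDesc hR ⟨N - 1, n1lt⟩ := rfl
  clear_value lam mu lamW rho
  have heq' : x * lam + y₁ + y₂ = 0 := heq
  have hc2' : x * ((Matrix.trace (Cbar * Z)).re - Δ₀ * z₁ + lam * z₂) = 0 := hc2
  -- lam and mu nonneg
  have hlam0 : 0 ≤ lam := by rw [hlam_eig]; exact hC.eigenvalues_nonneg _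
  have hmu0 : 0 ≤ mu := by rw [hmu_eig]; exact hC.eigenvalues_nonneg _
  -- x < 0
  have hxneg : x < 0 := by
    rcases hx.lt_or_eq with h | h
    · exact h
    · exfalso
      rw [h] at heq' hlin
      rw [zero_mul, zero_add] at heq'
      have hy2 : y₂ = -y₁ := by linarith
      rw [hy2] at hlin
      linarith [mul_nonneg hη₁0 hy₁, mul_nonneg hη₂ hy₁]
  -- lam > 0
  have hlampos : 0 < lam := by
    rcases hlam0.eq_or_lt with h | h
    · exfalso
      rw [← h, mul_zero, zero_add] at heq'
      have hy2 : y₂ = -y₁ := by linarith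
      rw [hy2] at hlin
      linarith [mul_pos hΔ₀ (neg_pos.mpr hxneg), mul_nonneg hη₁0 hy₁, mul_nonneg hη₂ hy₁]
    · exact h
  have hy12 : 0 < y₁ + y₂ := by
    have := mul_pos (neg_pos.mpr hxneg) hlampos
    linarith
  -- trace identities
  have hZW : Matrix.trace (Z * W) = Matrix.trace (Rhat * W) := by
    rw [Matrix.sub_mul, Matrix.trace_sub, sub_eq_zero] at hc1
    exact hc1.symm
  have hc6' : Matrix.trace (Z * W) - (x : ℂ) * Matrix.trace (Z * Cbar)
      - ((y₁ + y₂ : ℝ) : ℂ) * Matrix.trace Z = 0 := by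
    have h := hc6
    rw [Matrix.mul_sub, Matrix.mul_sub, Matrix.trace_sub, Matrix.trace_sub,
      Matrix.mul_smul, Matrix.trace_smul, Matrix.mul_smul, Matrix.mul_one,
      Matrix.trace_smul, smul_eq_mul, smul_eq_mul] at h
    exact h
  have E : z₁ = x * (Matrix.trace (Cbar * Z)).re + (y₁ + y₂) * (Matrix.trace Z).re := by
    have h1 := congrArg Complex.re hc6'
    rw [Matrix.trace_mul_comm Z Cbar] at h1
    simp only [Complex.sub_re, Complex.re_ofReal_mul, Complex.zero_re] at h1
    have h2 := congrArg Complex.re hZW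
    rw [hz₁]
    linarith
  -- part 1b
  have h1b : (Matrix.trace (Cbar * Z)).re < lam * (Matrix.trace Z).re := by
    by_contra hcon
    push_neg at hcon
    have hle := mul_le_mul_of_nonpos_left hcon (le_of_lt hxneg)
    have hprod : (x * lam + y₁ + y₂) * (Matrix.trace Z).re = 0 := by
      rw [heq', zero_mul]
    linarith [hle, hprod, E, hz₁pos]
  -- part 2
  have h2 : z₁ = ((Matrix.trace (Cbar * Z)).re + z₂ * lam) / Δ₀ := by
    have hz := (mul_eq_zero.mp hc2').resolve_left (ne_of_lt hxneg)
    field_simp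
    linarith
  -- part 4
  have h4 : lamW ≥ -x * (lam - mu) := by
    set v : Fin N → ℂ := ⇑(hC.isHermitian.eigenvectorBasis
      (Tuple.sort hC.isHermitian.eigenvalues (Fin.rev ⟨N - 1, n1lt⟩))) with hv_def
    have hCv : Cbar *ᵥ v = mu • v := by
      rw [hmu_eig]; exact hC.isHermitian.mulVec_eigenvectorBasis _
    have n2 : star v ⬝ᵥ v = 1 := by
      have h1 : ‖hC.isHermitian.eigenvectorBasis
          (Tuple.sort hC.isHermitian.eigenvalues (Fin.rev ⟨N - 1, n1lt⟩))‖ = 1 :=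
        hC.isHermitian.eigenvectorBasis.orthonormal.1 _
      have h2 := EuclideanSpace.inner_eq_star_dotProduct (𝕜 := ℂ)
        (hC.isHermitian.eigenvectorBasis
          (Tuple.sort hC.isHermitian.eigenvalues (Fin.rev ⟨N - 1, n1lt⟩)))
        (hC.isHermitian.eigenvectorBasis
          (Tuple.sort hC.isHermitian.eigenvalues (Fin.rev ⟨N - 1, n1lt⟩)))
      rw [inner_self_eq_norm_sq_to_K, h1] at h2
      have h3 := h2.symm
      simp at h3
      rw [dotProduct_comm] at h3
      exact h3
    have hlow : x * mu + (y₁ + y₂) ≤ (star v ⬝ᵥ W *ᵥ v).re := by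
      have h0 := hLMI.dotProduct_mulVec_nonneg v
      have hq : star v ⬝ᵥ ((W - (x : ℂ) • Cbar - ((y₁ + y₂ : ℝ) : ℂ) • 1) *ᵥ v) =
          star v ⬝ᵥ (W *ᵥ v) - ((x * mu : ℝ) : ℂ) - ((y₁ + y₂ : ℝ) : ℂ) := by
        rw [Matrix.sub_mulVec, Matrix.sub_mulVec, Matrix.smul_mulVec,
          Matrix.smul_mulVec, Matrix.one_mulVec, dotProduct_sub,
          dotProduct_sub, dotProduct_smul, dotProduct_smul,
          hCv, dotProduct_smul, n2]
        push_cast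
        simp [Complex.real_smul]
        try ring
      rw [hq] at h0
      have := (Complex.le_def.mp h0).1
      simp at this
      linarith
    have hup : (star v ⬝ᵥ W *ᵥ v).re ≤ lamW := by
      have hpsd := smul_one_sub_posSemidef hW.isHermitian
        (fun i => hlamW_desc ▸ le_eigDesc_zero n0lt hW.isHermitian i)
      have h0 := hpsd.dotProduct_mulVec_nonneg v
      have hq : star v ⬝ᵥ (((lamW : ℂ) • 1 - W) *ᵥ v) =
          ((lamW : ℝ) : ℂ) - star v ⬝ᵥ (W *ᵥ v) := by
        rw [Matrix.sub_mulVec, Matrix.smul_mulVec, Matrix.one_mulVec,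
          dotProduct_sub, dotProduct_smul, n2, smul_eq_mul, mul_one]
      rw [hq] at h0
      have := (Complex.le_def.mp h0).1
      simpa using this
    linarith
  refine ⟨⟨hxneg, h1b⟩, h2, hy12, h4, ?_⟩
  -- part 5
  intro w hWw _
  have hRpsd : Rhat.PosSemidef := by
    have := hRZ.add hZ
    simpa using this
  have hrho0 : 0 ≤ rho := by
    rw [show rho = hR.eigenvalues (Tuple.sort hR.eigenvalues (Fin.rev ⟨N - 1, n1lt⟩)) from hrho_desc]
    exact hRpsd.eigenvalues_nonneg _
  have hpsdR := sub_smul_one_posSemidef hR (fun i => hrho_desc ▸ eigDesc_last_le n0lt hR i)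
  have h0 := hpsdR.dotProduct_mulVec_nonneg w
  have hq : star w ⬝ᵥ ((Rhat - (rho : ℂ) • 1) *ᵥ w) =
      star w ⬝ᵥ (Rhat *ᵥ w) - (rho : ℂ) * (star w ⬝ᵥ w) := by
    rw [Matrix.sub_mulVec, Matrix.smul_mulVec, Matrix.one_mulVec,
      dotProduct_sub, dotProduct_smul, smul_eq_mul]
  rw [hq] at h0
  have hre : rho * (star w ⬝ᵥ w).re ≤ (star w ⬝ᵥ Rhat *ᵥ w).re := by
    have := (Complex.le_def.mp h0).1
    simp only [Complex.zero_re, Complex.sub_re, Complex.re_ofReal_mul] at this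
    linarith
  have htrW : Matrix.trace W = star w ⬝ᵥ w := by
    rw [hWw]
    simp [Matrix.trace, Matrix.diag, Matrix.vecMulVec_apply, dotProduct, mul_comm]
  have hsum : (star w ⬝ᵥ w).re = ∑ i, hW.isHermitian.eigenvalues i := by
    rw [← htrW, trace_eq_sum_eig hW.isHermitian, ← Complex.ofReal_sum, Complex.ofReal_re]
  have hlamW_le : lamW ≤ ∑ i, hW.isHermitian.eigenvalues i := by
    rw [hlamW_eig]
    exact Finset.single_le_sum (fun i _ => hW.eigenvalues_nonneg i) (Finset.mem_univ _)
  have hfinal : rho * (-x * (lam - mu)) ≤ rho * (star w ⬝ᵥ w).re := by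
    apply mul_le_mul_of_nonneg_left _ hrho0
    rw [hsum]
    linarith
  linarith [hfinal, hre]
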